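/- Let n ≥ 1 and let S be a nonempty set of integers i with 1 ≤ i ≤ ⌊(n−1)/2⌋. Define the rotation symmetric quadratic Boolean function Q : (Fin n → ZMod 2) → ZMod 2 by Q(x) = ∑_{i∈S} ∑_{j=0}^{n−1} x_j · x_{(j+i) mod n}, and define its trace form Q' : GaloisField 2 n → ZMod 2 by Q'(x) = Tr(∑_{i∈S} x^(2^i+1)), where Tr is the field trace of GaloisField 2 n over ZMod 2. Then, as integers, (2^n − 2·wt(Q))² = (2^n − 2·wt(Q'))²; in particular Q is balanced if and only if Q' is balanced. -/

import Mathlib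

set_option linter.unusedSectionVars false
set_option linter.unusedVariables false
set_option maxHeartbeats 2000000

/-- The monomial rotation symmetric quadratic function `(0,t)_n`:
`x ↦ ∑_{j=0}^{n-1} x_j * x_{(j+t) mod n}` over `ZMod 2`. -/
def mrs (n t : ℕ) (x : Fin n → ZMod 2) : ZMod 2 :=
  ∑ j : Fin n, x j * x ⟨(j.val + t) % n, Nat.mod_lt _ j.pos⟩

/-- Hamming weight of a Boolean function in `n` variables. -/
noncomputable def wtB {n : ℕ} (f : (Fin n → ZMod 2) → ZMod 2) : ℕ :=
  Nat.card {x : Fin n → ZMod 2 // f x = 1}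

/-- Hamming weight of a function on `GaloisField 2 n`. -/
noncomputable def wtG (n : ℕ) (g : GaloisField 2 n → ZMod 2) : ℕ :=
  Nat.card {x : GaloisField 2 n // g x = 1}

namespace RSAux

noncomputable instance instFintypeK (n : ℕ) : Fintype (GaloisField 2 n) := Fintype.ofFinite _


def chi (v : ZMod 2) : ℤ := 1 - 2 * (v.val : ℤ)

lemma chi_zero : chi 0 = 1 := by decide
lemma chi_one : chi 1 = -1 := by decide
lemma chi_add : ∀ a b : ZMod 2, chi (a + b) = chi a * chi b := by decide

section Generic
variable {V : Type*} [Fintype V] [AddCommGroup V]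
set_option linter.unusedSectionVars false

lemma sum_chi_eq_card (g : V → ZMod 2) (h0 : ∀ x, g x = 0) :
    ∑ x, chi (g x) = (Fintype.card V : ℤ) := by
  simp [h0, chi_zero, Finset.card_univ]

lemma sum_chi_eq_zero (g : V → ZMod 2) (hadd : ∀ a b, g (a + b) = g a + g b)
    (x0 : V) (hx0 : g x0 ≠ 0) : ∑ x, chi (g x) = 0 := by
  have h1 : g x0 = 1 := by
    revert hx0; generalize g x0 = v; revert v; decide
  have key : ∑ x, chi (g (x + x0)) = ∑ x, chi (g x) :=
    Fintype.sum_equiv (Equiv.addRight x0) _ _ (fun x => rfl)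
  have key2 : ∀ x, chi (g (x + x0)) = - chi (g x) := by
    intro x
    rw [hadd, h1, chi_add, chi_one]; ring
  simp only [key2, Finset.sum_neg_distrib] at key
  linarith

lemma sq_sum_chi (f : V → ZMod 2) :
    (∑ x, chi (f x)) ^ 2 = ∑ h : V, ∑ x, chi (f (x + h) + f x) := by
  rw [sq, Finset.sum_mul_sum]
  have h1 : ∀ x : V, (∑ y : V, chi (f x) * chi (f y)) = ∑ h : V, chi (f (x + h) + f x) := by
    intro x
    refine (Fintype.sum_equiv (Equiv.addLeft x) _ _ (fun h => ?_)).symm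
    simp only [Equiv.coe_addLeft]
    rw [chi_add]; ring
  rw [Finset.sum_congr rfl (fun x _ => h1 x), Finset.sum_comm]

lemma walsh_sq (f : V → ZMod 2) (r : V → V → ZMod 2)
    (hder : ∀ h x, f (x + h) = f x + f h + r h x) :
    (∑ x, chi (f x)) ^ 2 = ∑ h : V, chi (f h) * ∑ x, chi (r h x) := by
  rw [sq_sum_chi]
  refine Finset.sum_congr rfl (fun h _ => ?_)
  rw [Finset.mul_sum]
  refine Finset.sum_congr rfl (fun x _ => ?_)
  rw [hder, ← chi_add]
  congr 1
  have : ∀ a b c : ZMod 2, a + b + c + a = b + c := by decide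
  rw [this]

lemma card_sub_two_wt (f : V → ZMod 2) :
    (Fintype.card V : ℤ) - 2 * (Nat.card {x // f x = 1} : ℤ) = ∑ x, chi (f x) := by
  classical
  have h1 : (Nat.card {x // f x = 1} : ℤ) = ∑ x, ((f x).val : ℤ) := by
    rw [Nat.card_eq_fintype_card, Fintype.card_subtype, Finset.card_filter]
    push_cast
    refine Finset.sum_congr rfl (fun x _ => ?_)
    have : ∀ v : ZMod 2, (if v = 1 then (1:ℤ) else 0) = (v.val : ℤ) := by decide
    rw [this]
  rw [h1, Finset.mul_sum]
  unfold chi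
  rw [Finset.sum_sub_distrib]
  simp [Finset.card_univ]


end Generic

section Field
variable (n : ℕ) [NeZero n]

lemma cardK : Fintype.card (GaloisField 2 n) = 2 ^ n := by
  have := GaloisField.card 2 n (NeZero.ne n)
  rwa [Nat.card_eq_fintype_card] at this

lemma pow_cardK (x : GaloisField 2 n) : x ^ (2 ^ n) = x := by
  have := FiniteField.pow_card x
  rwa [cardK] at this

lemma pow2_mod (x : GaloisField 2 n) (a : ℕ) : x ^ (2 ^ a) = x ^ (2 ^ (a % n)) := by
  conv_lhs => rw [← Nat.div_add_mod a n]
  generalize a % n = r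
  generalize a / n = q
  induction q with
  | zero => simp
  | succ k ih =>
    have harith : n * (k + 1) + r = (n * k + r) + n := by ring
    rw [harith, pow_add, pow_mul, pow_cardK, ih]

noncomputable def algFrob : (GaloisField 2 n) ≃ₐ[ZMod 2] (GaloisField 2 n) :=
  AlgEquiv.ofBijective
    { toRingHom := frobenius (GaloisField 2 n) 2,
      commutes' := fun r => by
        show frobenius (GaloisField 2 n) 2 (algebraMap (ZMod 2) _ r) = algebraMap _ _ r
        rw [frobenius_def, ← map_pow]
        congr 1
        revert r; decide }
    (Finite.injective_iff_bijective.mp (frobenius (GaloisField 2 n) 2).injective)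

omit [NeZero n] in
lemma algFrob_apply (x : GaloisField 2 n) : algFrob n x = x ^ 2 := rfl

lemma algFrob_pow_apply (i : ℕ) (x : GaloisField 2 n) :
    ((algFrob n) ^ i) x = x ^ (2 ^ i) := by
  induction i generalizing x with
  | zero => simp
  | succ k ih =>
    rw [pow_succ, AlgEquiv.mul_apply, algFrob_apply, ih (x ^ 2), ← pow_mul, ← pow_succ']

lemma poly_indep (a : ZMod n → ZMod 2)
    (hax : ∀ x : GaloisField 2 n, ∑ j : ZMod n, a j • x ^ (2 ^ j.val) = 0) : a = 0 := by
  classical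
  by_contra ha
  obtain ⟨j0, hj0⟩ : ∃ j0, a j0 ≠ 0 := by
    by_contra h; push_neg at h; exact ha (funext fun j => h j)
  have hj1 : a j0 = 1 := by revert hj0; generalize a j0 = v; revert v; decide
  set P : Polynomial (GaloisField 2 n) :=
    ∑ j : ZMod n, Polynomial.C (algebraMap (ZMod 2) (GaloisField 2 n) (a j))
      * Polynomial.X ^ (2 ^ j.val) with hP
  have hPeval : ∀ x, P.eval x = 0 := by
    intro x
    rw [hP, Polynomial.eval_finset_sum]
    rw [← hax x]
    refine Finset.sum_congr rfl (fun j _ => ?_)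
    simp only [Polynomial.eval_mul, Polynomial.eval_C, Polynomial.eval_pow, Polynomial.eval_X]
    exact (Algebra.smul_def _ _).symm
  have hPne : P ≠ 0 := by
    intro h0
    have hc := congrArg (fun p => Polynomial.coeff p (2 ^ j0.val)) h0
    simp only [hP, Polynomial.finset_sum_coeff, Polynomial.coeff_C_mul,
      Polynomial.coeff_X_pow, Polynomial.coeff_zero] at hc
    rw [Finset.sum_eq_single j0] at hc
    · rw [if_pos rfl, hj1, map_one, mul_one] at hc
      exact one_ne_zero hc
    · intro b _ hb
      rw [if_neg, mul_zero]
      intro hpow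
      exact hb (ZMod.val_injective n (Nat.pow_right_injective (le_refl 2) hpow.symm))
    · intro habs; exact absurd (Finset.mem_univ j0) habs
  have hdeg : P.natDegree ≤ 2 ^ (n - 1) := by
    rw [hP]
    refine Polynomial.natDegree_sum_le_of_forall_le _ _ (fun j _ => ?_)
    refine le_trans (Polynomial.natDegree_C_mul_le _ _) ?_
    rw [Polynomial.natDegree_X_pow]
    refine Nat.pow_le_pow_right (by norm_num) ?_
    have := ZMod.val_lt j
    omega
  have hroots : (Finset.univ : Finset (GaloisField 2 n)) ⊆ P.roots.toFinset := by
    intro x _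
    rw [Multiset.mem_toFinset, Polynomial.mem_roots hPne]
    exact hPeval x
  have hcard := Finset.card_le_card hroots
  rw [Finset.card_univ, cardK] at hcard
  have h2 := Multiset.toFinset_card_le P.roots
  have h3 := P.card_roots'
  have hlt : (2:ℕ)^(n-1) < 2^n :=
    Nat.pow_lt_pow_right (by norm_num) (by have := NeZero.pos n; omega)
  omega

-- new material
lemma galEnum_bij :
    Function.Bijective (fun j : ZMod n => (algFrob n) ^ (j.val)) := by
  classical
  rw [Fintype.bijective_iff_injective_and_card]
  constructor
  · intro a b hab
    by_contra hne
    have hx : ∀ x : GaloisField 2 n, x ^ (2 ^ a.val) = x ^ (2 ^ b.val) := by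
      intro x
      have := congrArg (fun φ : (GaloisField 2 n) ≃ₐ[ZMod 2] (GaloisField 2 n) => φ x) hab
      simpa only [algFrob_pow_apply] using this
    have key : ∀ x : GaloisField 2 n,
        ∑ j : ZMod n, ((Pi.single a 1 + Pi.single b 1 : ZMod n → ZMod 2)) j • x ^ (2 ^ j.val) = 0 := by
      intro x
      have h1 : ∀ (c : ZMod n), ∑ j : ZMod n, (Pi.single c 1 : ZMod n → ZMod 2) j • x ^ (2 ^ j.val)
          = x ^ (2 ^ c.val) := by
        intro c
        rw [Finset.sum_eq_single c]
        · simp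
        · intro j _ hj; rw [Pi.single_eq_of_ne hj, zero_smul]
        · intro habs; exact absurd (Finset.mem_univ c) habs
      simp only [Pi.add_apply, add_smul, Finset.sum_add_distrib, h1, hx x]
      exact CharTwo.add_self_eq_zero _
    have := poly_indep n _ key
    have h2 := congrFun this a
    simp only [Pi.add_apply, Pi.single_eq_same, Pi.single_eq_of_ne hne, Pi.zero_apply,
      add_zero] at h2
    exact one_ne_zero h2
  · rw [ZMod.card, ← Nat.card_eq_fintype_card, IsGalois.card_aut_eq_finrank, GaloisField.finrank 2 (NeZero.ne n)]

lemma trace_bridge (x : GaloisField 2 n) :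
    algebraMap (ZMod 2) (GaloisField 2 n) (Algebra.trace (ZMod 2) (GaloisField 2 n) x)
      = ∑ j : ZMod n, x ^ (2 ^ j.val) := by
  rw [trace_eq_sum_automorphisms]
  exact (Fintype.sum_bijective _ (galEnum_bij n) _ _
    (fun j => (algFrob_pow_apply n j.val x).symm)).symm

lemma trace_pow2 (x : GaloisField 2 n) (i : ℕ) :
    Algebra.trace (ZMod 2) (GaloisField 2 n) (x ^ (2 ^ i))
      = Algebra.trace (ZMod 2) (GaloisField 2 n) x := by
  have inj := (algebraMap (ZMod 2) (GaloisField 2 n)).injective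
  apply inj
  rw [trace_bridge, trace_bridge]
  refine Fintype.sum_equiv (Equiv.addRight (i : ZMod n)) _ _ (fun j => ?_)
  simp only [Equiv.coe_addRight]
  rw [← pow_mul, ← pow_add, pow2_mod, ZMod.val_add, ZMod.val_natCast]
  congr 2
  rw [Nat.add_comm i j.val, Nat.add_mod j.val i n, Nat.mod_eq_of_lt (ZMod.val_lt j)]

-- new material
noncomputable def conj (α : GaloisField 2 n) (j : ZMod n) : GaloisField 2 n := α ^ (2 ^ j.val)

lemma conj_zero (α : GaloisField 2 n) : conj n α 0 = α := by
  simp [conj, ZMod.val_zero]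

lemma conj_pow (α : GaloisField 2 n) (j : ZMod n) (i : ℕ) :
    (conj n α j) ^ (2 ^ i) = conj n α (j + (i : ZMod n)) := by
  unfold conj
  rw [← pow_mul, ← pow_add, pow2_mod, ZMod.val_add, ZMod.val_natCast]
  congr 2
  rw [Nat.add_mod j.val i n, Nat.mod_eq_of_lt (ZMod.val_lt j)]

noncomputable def theta (α : GaloisField 2 n) (h : ZMod n → ZMod 2) : GaloisField 2 n :=
  ∑ j, h j • conj n α j

lemma smul_pow2 (r : ZMod 2) (x : GaloisField 2 n) (i : ℕ) :
    (r • x) ^ (2 ^ i) = r • x ^ (2 ^ i) := by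
  have hr : r = 0 ∨ r = 1 := by revert r; decide
  rcases hr with h | h <;> subst h
  · rw [zero_smul, zero_smul, zero_pow (by positivity)]
  · rw [one_smul, one_smul]

lemma theta_pow (α : GaloisField 2 n) (h : ZMod n → ZMod 2) (i : ℕ) :
    (theta n α h) ^ (2 ^ i) = ∑ j, h j • conj n α (j + (i : ZMod n)) := by
  unfold theta
  rw [sum_pow_char_pow]
  refine Finset.sum_congr rfl (fun j _ => ?_)
  rw [smul_pow2, conj_pow]

lemma theta_zero (α : GaloisField 2 n) : theta n α 0 = 0 := by
  simp [theta]

lemma theta_sub (α : GaloisField 2 n) (h h' : ZMod n → ZMod 2) :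
    theta n α (h - h') = theta n α h - theta n α h' := by
  simp [theta, sub_smul, Finset.sum_sub_distrib]

lemma exists_normal : ∃ α : GaloisField 2 n, Function.Bijective (theta n α) := by
  classical
  set F : GaloisField 2 n →ₗ[ZMod 2] GaloisField 2 n := (algFrob n).toLinearMap with hF
  have hFapp : ∀ x, F x = x ^ 2 := fun x => algFrob_apply n x
  -- X^k • of x = of (x ^ 2^k)
  have hXpow : ∀ (k : ℕ) (y : GaloisField 2 n),
      (Polynomial.X ^ k : Polynomial (ZMod 2)) • (Module.AEval'.of F y)
        = Module.AEval'.of F (y ^ (2 ^ k)) := by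
    intro k
    induction k with
    | zero => intro y; simp
    | succ l ih =>
      intro y
      rw [pow_succ, mul_smul, Module.AEval'.X_smul_of, hFapp, ih (y ^ 2), ← pow_mul, ← pow_succ']
  have htor : Module.IsTorsion (Polynomial (ZMod 2)) (Module.AEval' F) := by
    intro m
    refine ⟨⟨Polynomial.X ^ n - 1, mem_nonZeroDivisors_of_ne_zero ?_⟩, ?_⟩
    · have hm : (Polynomial.X ^ n - 1 : Polynomial (ZMod 2)).Monic := by
        have := Polynomial.monic_X_pow_sub_C (1 : ZMod 2) (NeZero.ne n)
        simpa using this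
      exact hm.ne_zero
    · show (Polynomial.X ^ n - 1 : Polynomial (ZMod 2)) • m = 0
      obtain ⟨x, rfl⟩ : ∃ x, Module.AEval'.of F x = m :=
        ⟨(Module.AEval'.of F).symm m, by simp⟩
      rw [sub_smul, one_smul, sub_eq_zero, hXpow n x, pow_cardK]
  obtain ⟨ι, hfin, p, hirr, e, ⟨g⟩⟩ :=
    Module.equiv_directSum_of_isTorsion (R := Polynomial (ZMod 2)) (M := Module.AEval' F) htor
  haveI := hfin
  set w : DirectSum ι fun i => Polynomial (ZMod 2) ⧸ Submodule.span (Polynomial (ZMod 2)) {p i ^ e i} :=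
    ∑ i : ι, DirectSum.of _ i (Submodule.Quotient.mk 1) with hw
  set v := g.symm w with hv
  set α := (Module.AEval'.of F).symm v with hα
  have hofα : Module.AEval'.of F α = v := by rw [hα]; simp
  -- polynomial action computes theta
  have key : ∀ (x : GaloisField 2 n) (h : ZMod n → ZMod 2),
      (∑ j : ZMod n, Polynomial.C (h j) * Polynomial.X ^ j.val) • (Module.AEval'.of F x)
        = Module.AEval'.of F (∑ j : ZMod n, h j • x ^ (2 ^ j.val)) := by
    intro x h
    rw [Finset.sum_smul, map_sum]
    refine Finset.sum_congr rfl (fun j _ => ?_)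
    rw [mul_smul, hXpow, Module.AEval.C_smul, map_smul]
  -- injectivity of theta
  have hker : ∀ h : ZMod n → ZMod 2, theta n α h = 0 → h = 0 := by
    intro h h0
    set ch : Polynomial (ZMod 2) := ∑ j : ZMod n, Polynomial.C (h j) * Polynomial.X ^ j.val
      with hch
    have h1 : ch • v = 0 := by
      rw [← hofα, key α h]
      show Module.AEval'.of F (theta n α h) = 0
      rw [h0, map_zero]
    have h2 : ch • w = 0 := by
      have := congrArg g h1
      rwa [map_smul, map_zero, hv, LinearEquiv.apply_symm_apply] at this
    -- componentwise divisibility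
    have hdvd : ∀ i : ι, p i ^ e i ∣ ch := by
      intro i
      have hcomp : (ch • w) i = (0 : DirectSum ι fun i => Polynomial (ZMod 2) ⧸ Submodule.span (Polynomial (ZMod 2)) {p i ^ e i}) i :=
        congrArg (fun z => z i) h2
      rw [DirectSum.smul_apply, DirectSum.zero_apply] at hcomp
      have hwi : w i = Submodule.Quotient.mk 1 := by
        rw [hw]
        rw [DFinsupp.finset_sum_apply]
        rw [Finset.sum_eq_single i]
        · simp [DirectSum.of_apply]
        · intro b _ hb
          simp [DirectSum.of_apply, hb]
        · intro habs; exact absurd (Finset.mem_univ i) habs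
      rw [hwi] at hcomp
      rw [← Submodule.Quotient.mk_smul, smul_eq_mul, mul_one, Submodule.Quotient.mk_eq_zero,
        Submodule.mem_span_singleton] at hcomp
      obtain ⟨r, hr⟩ := hcomp
      exact ⟨r, by rw [← hr, smul_eq_mul, mul_comm]⟩
    -- ch kills everything
    have hkill : ∀ m : Module.AEval' F, ch • m = 0 := by
      intro m
      have hg : ch • g m = 0 := by
        refine DFinsupp.ext (fun i => ?_)
        rw [DirectSum.smul_apply, DirectSum.zero_apply]
        obtain ⟨r, hr⟩ := Submodule.Quotient.mk_surjective _ ((g m) i)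
        rw [← hr, ← Submodule.Quotient.mk_smul, smul_eq_mul, Submodule.Quotient.mk_eq_zero,
          Submodule.mem_span_singleton]
        obtain ⟨c, hc⟩ := hdvd i
        exact ⟨r * c, by rw [smul_eq_mul]; rw [hc]; ring⟩
      have := congrArg g.symm hg
      rwa [map_smul, map_zero, LinearEquiv.symm_apply_apply] at this
    -- so ch acts as zero on every x
    have hzero : ∀ x : GaloisField 2 n, ∑ j : ZMod n, h j • x ^ (2 ^ j.val) = 0 := by
      intro x
      have hk2 := key x h
      rw [← hch] at hk2
      have h3 : Module.AEval'.of F (∑ j : ZMod n, h j • x ^ (2 ^ j.val)) = 0 := by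
        rw [← hk2]; exact hkill _
      have h4 : Module.AEval'.of F (∑ j : ZMod n, h j • x ^ (2 ^ j.val))
          = Module.AEval'.of F 0 := by rw [h3, map_zero]
      exact (Module.AEval'.of F).injective h4
    exact poly_indep n h hzero
  refine ⟨α, ?_⟩
  rw [Fintype.bijective_iff_injective_and_card]
  constructor
  · intro a b hab
    have : theta n α (a - b) = 0 := by rw [theta_sub, hab, sub_self]
    have h0 := hker _ this
    have := congrArg (fun f => f + b) h0
    simpa using this
  · rw [Fintype.card_fun, ZMod.card, ZMod.card, cardK]

lemma trace_alpha (α : GaloisField 2 n) (hbij : Function.Bijective (theta n α)) :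
    Algebra.trace (ZMod 2) (GaloisField 2 n) α = 1 := by
  by_contra hne
  have h0 : Algebra.trace (ZMod 2) (GaloisField 2 n) α = 0 := by
    revert hne; generalize Algebra.trace (ZMod 2) (GaloisField 2 n) α = v; revert v; decide
  have hsum : theta n α (fun _ => 1) = 0 := by
    unfold theta
    simp only [one_smul]
    have hb := trace_bridge n α
    rw [h0, map_zero] at hb
    exact hb.symm
  have h1 : (fun _ => (1:ZMod 2)) = (0 : ZMod n → ZMod 2) :=
    hbij.1 (by rw [hsum, theta_zero])
  have h2 := congrFun h1 0
  exact one_ne_zero h2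

lemma trace_half (x : GaloisField 2 n) (k : ZMod n) (hk : k ≠ 0) (hkk : k + k = 0) :
    Algebra.trace (ZMod 2) (GaloisField 2 n) (x * x ^ (2 ^ k.val)) = 0 := by
  set u := x * x ^ (2 ^ k.val) with hu
  have hval : (k.val + k.val) % n = 0 := by
    have := ZMod.val_add k k
    rw [hkk, ZMod.val_zero] at this
    omega
  have h2d : x ^ (2 ^ k.val * 2 ^ k.val) = x := by
    rw [← pow_add, pow2_mod n x (k.val + k.val), hval, pow_zero, pow_one]
  have huk : u ^ (2 ^ k.val) = u := by
    rw [hu, mul_pow, ← pow_mul, h2d, mul_comm]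
  have hinj := (algebraMap (ZMod 2) (GaloisField 2 n)).injective
  apply hinj
  rw [trace_bridge, map_zero]
  refine Finset.sum_ninvolution (fun j => j + k) (fun j => ?_) (fun j hj => ?_)
    (fun j => Finset.mem_univ _) (fun j => by show j + k + k = j; rw [add_assoc, hkk, add_zero])
  · -- f j + f (j + k) = 0
    have hjk : u ^ (2 ^ (j + k).val) = u ^ (2 ^ j.val) := by
      rw [ZMod.val_add, ← pow2_mod n u (j.val + k.val), pow_add,
        mul_comm ((2:ℕ) ^ j.val) ((2:ℕ) ^ k.val), pow_mul, huk]
    rw [hjk]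
    exact CharTwo.add_self_eq_zero _
  · -- nonzero → moves
    intro heq
    exact absurd (by simpa using congrArg (fun z => z - j) heq) hk

-- new
noncomputable def tfun (α : GaloisField 2 n) (d : ZMod n) : ZMod 2 :=
  Algebra.trace (ZMod 2) (GaloisField 2 n) (α * conj n α d)

lemma natCast_val (a : ZMod n) : ((a.val : ℕ) : ZMod n) = a := ZMod.natCast_rightInverse a

lemma trace_conj_mul (α : GaloisField 2 n) (a b : ZMod n) :
    Algebra.trace (ZMod 2) (GaloisField 2 n) (conj n α a * conj n α b) = tfun n α (b - a) := by
  have h1 : (α * conj n α (b - a)) ^ (2 ^ a.val) = conj n α a * conj n α b := by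
    rw [mul_pow, conj_pow, natCast_val, sub_add_cancel]
    rfl
  rw [← h1, trace_pow2]
  rfl

lemma tfun_zero (α : GaloisField 2 n) (hbij : Function.Bijective (theta n α)) :
    tfun n α 0 = 1 := by
  unfold tfun
  rw [conj_zero, ← sq, show (α ^ 2) = α ^ (2 ^ 1) by norm_num, trace_pow2]
  exact trace_alpha n α hbij

lemma tfun_symm (α : GaloisField 2 n) (d : ZMod n) : tfun n α (-d) = tfun n α d := by
  unfold tfun
  have h1 : (α * conj n α (-d)) ^ (2 ^ d.val) = conj n α d * α := by
    rw [mul_pow, conj_pow, natCast_val, neg_add_cancel, conj_zero]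
    rfl
  rw [← trace_pow2 n (α * conj n α (-d)) d.val, h1, mul_comm]

lemma tfun_half (α : GaloisField 2 n) (d : ZMod n) (hd : d ≠ 0) (hdd : -d = d) :
    tfun n α d = 0 := by
  unfold tfun
  refine trace_half n α d hd ?_
  nth_rewrite 1 [← hdd]
  exact neg_add_cancel d

-- the crux
lemma crux (α : GaloisField 2 n) (hbij : Function.Bijective (theta n α)) (S : Finset ℕ)
    (h : ZMod n → ZMod 2)
    (hrad : ∀ j : ZMod n, ∑ i ∈ S, (h (j + (i : ZMod n)) + h (j - (i : ZMod n))) = 0) :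
    Algebra.trace (ZMod 2) (GaloisField 2 n) (∑ i ∈ S, (theta n α h) ^ (2 ^ i + 1))
      = ∑ i ∈ S, ∑ j : ZMod n, h j * h (j + (i : ZMod n)) := by
  classical
  set cfun : ZMod n → ZMod 2 := fun k => ∑ j : ZMod n, h j * h (j + k) with hcfun
  set m : ZMod n → ZMod 2 := fun d => ∑ i ∈ S, cfun ((i : ZMod n) + d) with hm
  have csymm : ∀ k, cfun (-k) = cfun k := by
    intro k
    show (∑ j : ZMod n, h j * h (j + -k)) = ∑ j : ZMod n, h j * h (j + k)
    refine Fintype.sum_equiv (Equiv.addRight (-k)) _ _ (fun j => ?_)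
    simp only [Equiv.coe_addRight]
    rw [add_assoc, neg_add_cancel, add_zero, mul_comm]
  have msymm : ∀ d, m (-d) = m d := by
    intro d
    have hsum : m d + m (-d) = 0 := by
      rw [hm]
      simp only
      rw [← Finset.sum_add_distrib]
      have hterm : ∀ i ∈ S, cfun ((i:ZMod n) + d) + cfun ((i:ZMod n) + -d)
          = ∑ j : ZMod n, h j * (h ((j + d) + (i:ZMod n)) + h ((j + d) - (i:ZMod n))) := by
        intro i _
        have e1 : cfun ((i:ZMod n) + d) = ∑ j : ZMod n, h j * h ((j + d) + (i:ZMod n)) := by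
          rw [hcfun]
          refine Finset.sum_congr rfl (fun j _ => ?_)
          congr 1
          ring
        have e2 : cfun ((i:ZMod n) + -d) = ∑ j : ZMod n, h j * h ((j + d) - (i:ZMod n)) := by
          rw [← csymm ((i:ZMod n) + -d), hcfun]
          simp only
          refine Finset.sum_congr rfl (fun j _ => ?_)
          congr 1
          ring
        rw [e1, e2, ← Finset.sum_add_distrib]
        refine Finset.sum_congr rfl (fun j _ => ?_)
        ring
      rw [Finset.sum_congr rfl hterm, Finset.sum_comm]
      refine Finset.sum_eq_zero (fun j _ => ?_)
      rw [← Finset.mul_sum, hrad (j + d), mul_zero]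
    have := neg_eq_of_add_eq_zero_right hsum
    rw [← this, CharTwo.neg_eq]
  -- expansion
  have expand : Algebra.trace (ZMod 2) (GaloisField 2 n) (∑ i ∈ S, (theta n α h) ^ (2 ^ i + 1))
      = ∑ d : ZMod n, m d * tfun n α d := by
    rw [map_sum]
    have hi : ∀ i ∈ S, Algebra.trace (ZMod 2) (GaloisField 2 n) ((theta n α h) ^ (2 ^ i + 1))
        = ∑ d : ZMod n, cfun ((i : ZMod n) + d) * tfun n α d := by
      intro i _
      rw [pow_add, pow_one, theta_pow]
      unfold theta
      rw [Finset.sum_mul_sum, map_sum]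
      have hab : ∀ a : ZMod n,
          Algebra.trace (ZMod 2) (GaloisField 2 n)
            (∑ b : ZMod n, (h a • conj n α (a + (i:ZMod n))) * (h b • conj n α b))
          = ∑ d : ZMod n, (h a * h (a + ((i:ZMod n) + d))) * tfun n α d := by
        intro a
        rw [map_sum]
        refine (Fintype.sum_equiv (Equiv.addLeft (a + (i:ZMod n))) _ _ (fun d => ?_)).symm
        simp only [Equiv.coe_addLeft]
        rw [smul_mul_smul_comm, map_smul, smul_eq_mul, trace_conj_mul]
        have e1 : a + (i:ZMod n) + d - (a + (i:ZMod n)) = d := by ring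
        have e2 : a + ((i:ZMod n) + d) = a + (i:ZMod n) + d := by ring
        rw [e1, e2]
      rw [Finset.sum_congr rfl (fun a _ => hab a), Finset.sum_comm]
      refine Finset.sum_congr rfl (fun d _ => ?_)
      rw [← Finset.sum_mul, hcfun]
    rw [Finset.sum_congr rfl hi, Finset.sum_comm]
    refine Finset.sum_congr rfl (fun d _ => ?_)
    rw [← Finset.sum_mul, hm]
  rw [expand]
  -- collapse to d = 0
  have collapse : ∑ d : ZMod n, m d * tfun n α d = m 0 * tfun n α 0 := by
    rw [← Finset.add_sum_erase _ _ (Finset.mem_univ (0 : ZMod n))]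
    have hrest : ∑ d ∈ Finset.univ.erase (0 : ZMod n), m d * tfun n α d = 0 := by
      refine Finset.sum_involution (fun d _ => -d) (fun d hd => ?_) (fun d hd hne => ?_)
        (fun d hd => ?_) (fun d hd => neg_neg d)
      · rw [msymm, tfun_symm]
        exact CharTwo.add_self_eq_zero _
      · intro heq
        have h0 : d ≠ 0 := (Finset.mem_erase.mp hd).1
        exact hne (by rw [tfun_half n α d h0 heq, mul_zero])
      · rw [Finset.mem_erase] at hd ⊢
        exact ⟨neg_ne_zero.mpr hd.1, Finset.mem_univ _⟩
    rw [hrest, add_zero]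
  rw [collapse, tfun_zero n α hbij, mul_one, hm]
  simp only
  refine Finset.sum_congr rfl (fun i _ => ?_)
  rw [add_zero, hcfun]

-- Boolean side over ZMod n
def Q0 (S : Finset ℕ) (u : ZMod n → ZMod 2) : ZMod 2 :=
  ∑ i ∈ S, ∑ j : ZMod n, u j * u (j + (i : ZMod n))

def Pv (S : Finset ℕ) (h : ZMod n → ZMod 2) (j : ZMod n) : ZMod 2 :=
  ∑ i ∈ S, (h (j + (i : ZMod n)) + h (j - (i : ZMod n)))

lemma Q0_deriv (S : Finset ℕ) (x h : ZMod n → ZMod 2) :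
    Q0 n S (x + h) = Q0 n S x + Q0 n S h + ∑ j, x j * Pv n S h j := by
  unfold Q0 Pv
  have key : ∀ i ∈ S, ∑ j : ZMod n, (x + h) j * (x + h) (j + (i : ZMod n))
      = (∑ j : ZMod n, x j * x (j + (i : ZMod n)))
        + (∑ j : ZMod n, h j * h (j + (i : ZMod n)))
        + ∑ j : ZMod n, x j * (h (j + (i : ZMod n)) + h (j - (i : ZMod n))) := by
    intro i _
    have hre : ∑ j : ZMod n, h j * x (j + (i : ZMod n))
        = ∑ j : ZMod n, x j * h (j - (i : ZMod n)) := by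
      refine Fintype.sum_equiv (Equiv.addRight ((i : ZMod n))) _ _ (fun j => ?_)
      simp only [Equiv.coe_addRight]
      rw [add_sub_cancel_right, mul_comm]
    have s1 : ∑ j : ZMod n, (x + h) j * (x + h) (j + (i : ZMod n))
        = (∑ j : ZMod n, (x j * x (j + (i : ZMod n)) + h j * h (j + (i : ZMod n))
            + x j * h (j + (i : ZMod n)))) + ∑ j : ZMod n, h j * x (j + (i : ZMod n)) := by
      rw [← Finset.sum_add_distrib]
      refine Finset.sum_congr rfl (fun j _ => ?_)
      simp only [Pi.add_apply]
      ring
    rw [s1, hre, ← Finset.sum_add_distrib]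
    rw [show (∑ j : ZMod n, x j * x (j + (i : ZMod n)))
          + (∑ j : ZMod n, h j * h (j + (i : ZMod n)))
          + ∑ j : ZMod n, x j * (h (j + (i : ZMod n)) + h (j - (i : ZMod n)))
        = ∑ j : ZMod n, (x j * x (j + (i : ZMod n)) + h j * h (j + (i : ZMod n))
            + x j * (h (j + (i : ZMod n)) + h (j - (i : ZMod n)))) by
      rw [← Finset.sum_add_distrib, ← Finset.sum_add_distrib]]
    refine Finset.sum_congr rfl (fun j _ => ?_)
    ring
  rw [Finset.sum_congr rfl key, Finset.sum_add_distrib, Finset.sum_add_distrib]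
  congr 1
  rw [Finset.sum_comm]
  refine Finset.sum_congr rfl (fun j _ => ?_)
  rw [Finset.mul_sum]

lemma bool_lin_add (S : Finset ℕ) (hv : ZMod n → ZMod 2) (a b : ZMod n → ZMod 2) :
    ∑ j, (a + b) j * hv j = (∑ j, a j * hv j) + ∑ j, b j * hv j := by
  rw [← Finset.sum_add_distrib]
  refine Finset.sum_congr rfl (fun j _ => ?_)
  simp only [Pi.add_apply]
  ring

lemma bool_lin_single (hv : ZMod n → ZMod 2) (j0 : ZMod n) :
    ∑ j, (Pi.single j0 1 : ZMod n → ZMod 2) j * hv j = hv j0 := by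
  rw [Finset.sum_eq_single j0]
  · rw [Pi.single_eq_same, one_mul]
  · intro b _ hb; rw [Pi.single_eq_of_ne hb, zero_mul]
  · intro habs; exact absurd (Finset.mem_univ j0) habs

-- field side
noncomputable def Dfield (S : Finset ℕ) (h : GaloisField 2 n) : GaloisField 2 n :=
  ∑ i ∈ S, (h ^ (2 ^ i) + h ^ (2 ^ (n - i)))

lemma trace_twist (S : Finset ℕ) (hSle : ∀ i ∈ S, i ≤ n) (x h : GaloisField 2 n) (i : ℕ)
    (hi : i ∈ S) :
    Algebra.trace (ZMod 2) (GaloisField 2 n) (x ^ (2 ^ i) * h)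
      = Algebra.trace (ZMod 2) (GaloisField 2 n) (x * h ^ (2 ^ (n - i))) := by
  have key : (x * h ^ (2 ^ (n - i))) ^ (2 ^ i) = x ^ (2 ^ i) * h := by
    rw [mul_pow, ← pow_mul, ← pow_add, Nat.sub_add_cancel (hSle i hi), pow_cardK]
  rw [← key, trace_pow2]

lemma Q'_deriv (S : Finset ℕ) (hSle : ∀ i ∈ S, i ≤ n) (x h : GaloisField 2 n) :
    Algebra.trace (ZMod 2) (GaloisField 2 n) (∑ i ∈ S, (x + h) ^ (2 ^ i + 1))
      = Algebra.trace (ZMod 2) (GaloisField 2 n) (∑ i ∈ S, x ^ (2 ^ i + 1))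
        + Algebra.trace (ZMod 2) (GaloisField 2 n) (∑ i ∈ S, h ^ (2 ^ i + 1))
        + Algebra.trace (ZMod 2) (GaloisField 2 n) (x * Dfield n S h) := by
  have expand : ∀ i ∈ S, (x + h) ^ (2 ^ i + 1)
      = x ^ (2 ^ i + 1) + h ^ (2 ^ i + 1) + (x ^ (2 ^ i) * h + h ^ (2 ^ i) * x) := by
    intro i _
    rw [pow_add, pow_one, add_pow_char_pow, pow_add, pow_one, pow_add, pow_one]
    ring
  rw [Finset.sum_congr rfl expand, Finset.sum_add_distrib, Finset.sum_add_distrib,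
    map_add, map_add]
  congr 1
  rw [Dfield, Finset.mul_sum, map_sum, map_sum]
  refine Finset.sum_congr rfl (fun i hi => ?_)
  rw [map_add, trace_twist n S hSle x h i hi, mul_comm (h ^ 2 ^ i) x, mul_add, map_add, add_comm]

lemma Dfield_theta (S : Finset ℕ) (hSle : ∀ i ∈ S, i ≤ n) (α : GaloisField 2 n)
    (h : ZMod n → ZMod 2) :
    Dfield n S (theta n α h) = theta n α (Pv n S h) := by
  unfold Dfield
  have hterm : ∀ i ∈ S, (theta n α h) ^ (2 ^ i) + (theta n α h) ^ (2 ^ (n - i))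
      = ∑ j : ZMod n, (h (j - (i : ZMod n)) + h (j + (i : ZMod n))) • conj n α j := by
    intro i hi
    rw [theta_pow, theta_pow]
    have hcast : ((n - i : ℕ) : ZMod n) = - (i : ZMod n) := by
      rw [Nat.cast_sub (hSle i hi), ZMod.natCast_self, zero_sub]
    have h1 : ∑ j : ZMod n, h j • conj n α (j + (i : ZMod n))
        = ∑ j : ZMod n, h (j - (i : ZMod n)) • conj n α j := by
      refine Fintype.sum_equiv (Equiv.addRight ((i : ZMod n))) _ _ (fun j => ?_)
      simp only [Equiv.coe_addRight]
      rw [add_sub_cancel_right]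
    have h2 : ∑ j : ZMod n, h j • conj n α (j + ((n - i : ℕ) : ZMod n))
        = ∑ j : ZMod n, h (j + (i : ZMod n)) • conj n α j := by
      refine Fintype.sum_equiv (Equiv.subRight ((i : ZMod n))) _ _ (fun j => ?_)
      simp only [Equiv.subRight_apply]
      rw [hcast, sub_add_cancel, sub_eq_add_neg]
    rw [h1, h2, ← Finset.sum_add_distrib]
    refine Finset.sum_congr rfl (fun j _ => ?_)
    rw [← add_smul]
  rw [Finset.sum_congr rfl hterm, Finset.sum_comm]
  unfold theta Pv
  refine Finset.sum_congr rfl (fun j _ => ?_)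
  rw [← Finset.sum_smul]
  congr 1
  refine Finset.sum_congr rfl (fun i _ => ?_)
  ring

lemma trace_mul_nondeg (c : GaloisField 2 n)
    (hc : ∀ x, Algebra.trace (ZMod 2) (GaloisField 2 n) (x * c) = 0) : c = 0 := by
  have hnd := traceForm_nondegenerate (ZMod 2) (GaloisField 2 n)
  refine hnd.1 c (fun y => ?_)
  rw [Algebra.traceForm_apply, mul_comm]
  exact hc y


-- transport between Fin n and ZMod n indexing
def eFin : ZMod n ≃ Fin n where
  toFun a := ⟨a.val, ZMod.val_lt a⟩
  invFun j := ((j : ℕ) : ZMod n)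
  left_inv a := natCast_val n a
  right_inv j := by
    refine Fin.ext ?_
    show ((((j : ℕ) : ZMod n)).val) = (j : ℕ)
    rw [ZMod.val_natCast, Nat.mod_eq_of_lt j.isLt]

lemma mrs_transport (S : Finset ℕ) (x : Fin n → ZMod 2) :
    ∑ i ∈ S, mrs n i x = Q0 n S (fun a => x (eFin n a)) := by
  unfold Q0 mrs
  refine Finset.sum_congr rfl (fun i _ => ?_)
  refine (Fintype.sum_equiv (eFin n) _ _ (fun a => ?_)).symm
  congr 1
  refine congrArg x (Fin.ext ?_)
  show (a + (i : ZMod n)).val = ((eFin n a).val + i) % n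
  have hval : (eFin n a).val = a.val := rfl
  rw [hval, ZMod.val_add, ZMod.val_natCast]
  conv_rhs => rw [Nat.add_mod a.val i n, Nat.mod_eq_of_lt (ZMod.val_lt a)]

lemma wt_transport (S : Finset ℕ) (Q : (Fin n → ZMod 2) → ZMod 2)
    (hQ : ∀ x, Q x = ∑ i ∈ S, mrs n i x) :
    Nat.card {x : Fin n → ZMod 2 // Q x = 1}
      = Nat.card {u : ZMod n → ZMod 2 // Q0 n S u = 1} := by
  refine Nat.card_congr
    (Equiv.subtypeEquiv (Equiv.arrowCongr (eFin n) (Equiv.refl (ZMod 2))).symm ?_)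
  intro x
  rw [hQ, mrs_transport]
  have harr : (((eFin n).arrowCongr (Equiv.refl (ZMod 2))).symm x) = fun a => x (eFin n a) := by
    funext a
    simp [Equiv.arrowCongr]
  rw [harr]

end Field
end RSAux

theorem walsh_zero_eq_of_trace_form
    (n : ℕ) (hn : 1 ≤ n) (S : Finset ℕ) (hS : S.Nonempty)
    (hSrange : ∀ i ∈ S, 1 ≤ i ∧ i ≤ (n - 1) / 2)
    (Q : (Fin n → ZMod 2) → ZMod 2)
    (hQ : ∀ x, Q x = ∑ i ∈ S, mrs n i x)
    (Q' : GaloisField 2 n → ZMod 2)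
    (hQ' : ∀ x, Q' x =
      Algebra.trace (ZMod 2) (GaloisField 2 n) (∑ i ∈ S, x ^ (2 ^ i + 1))) :
    ((2 : ℤ) ^ n - 2 * wtB Q) ^ 2 = ((2 : ℤ) ^ n - 2 * wtG n Q') ^ 2 ∧
      (wtB Q = 2 ^ (n - 1) ↔ wtG n Q' = 2 ^ (n - 1)) := by
  classical
  haveI : NeZero n := ⟨Nat.one_le_iff_ne_zero.mp hn⟩
  have hSle : ∀ i ∈ S, i ≤ n := by
    intro i hi
    exact le_trans (hSrange i hi).2 (le_trans (Nat.div_le_self _ _) (Nat.sub_le n 1))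
  obtain ⟨α, hbij⟩ := RSAux.exists_normal n
  have hcardG : Fintype.card (ZMod n → ZMod 2) = 2 ^ n := by
    rw [Fintype.card_fun, ZMod.card, ZMod.card]
  -- step 1: express both Walsh values as character sums
  have hwtB : ((2 : ℤ) ^ n - 2 * wtB Q)
      = ∑ u : ZMod n → ZMod 2, RSAux.chi (RSAux.Q0 n S u) := by
    have h1 := RSAux.card_sub_two_wt (RSAux.Q0 n S)
    rw [hcardG] at h1
    rw [← h1]
    have h2 : wtB Q = Nat.card {u : ZMod n → ZMod 2 // RSAux.Q0 n S u = 1} :=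
      RSAux.wt_transport n S Q hQ
    rw [h2]
    push_cast
    ring
  have hwtG : ((2 : ℤ) ^ n - 2 * wtG n Q')
      = ∑ y : GaloisField 2 n, RSAux.chi (Q' y) := by
    have h1 := RSAux.card_sub_two_wt Q'
    rw [RSAux.cardK] at h1
    rw [← h1]
    have h2 : wtG n Q' = Nat.card {y : GaloisField 2 n // Q' y = 1} := rfl
    rw [h2]
    push_cast
    ring
  -- step 2: Walsh square structure
  have hWB : (∑ u : ZMod n → ZMod 2, RSAux.chi (RSAux.Q0 n S u)) ^ 2
      = ∑ hv : ZMod n → ZMod 2, RSAux.chi (RSAux.Q0 n S hv)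
          * ∑ x : ZMod n → ZMod 2, RSAux.chi (∑ j, x j * RSAux.Pv n S hv j) :=
    RSAux.walsh_sq _ _ (fun hv x => RSAux.Q0_deriv n S x hv)
  have hWF : (∑ y : GaloisField 2 n, RSAux.chi (Q' y)) ^ 2
      = ∑ hK : GaloisField 2 n, RSAux.chi (Q' hK)
          * ∑ y : GaloisField 2 n,
              RSAux.chi (Algebra.trace (ZMod 2) (GaloisField 2 n)
                (y * RSAux.Dfield n S hK)) :=
    RSAux.walsh_sq _ _ (fun hK y => by
      rw [hQ', hQ', hQ', RSAux.Q'_deriv n S hSle y hK])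
  -- step 3: termwise equality under theta
  have hterm : ∀ hv : ZMod n → ZMod 2,
      RSAux.chi (RSAux.Q0 n S hv)
          * ∑ x : ZMod n → ZMod 2, RSAux.chi (∑ j, x j * RSAux.Pv n S hv j)
      = RSAux.chi (Q' (RSAux.theta n α hv))
          * ∑ y : GaloisField 2 n,
              RSAux.chi (Algebra.trace (ZMod 2) (GaloisField 2 n)
                (y * RSAux.Dfield n S (RSAux.theta n α hv))) := by
    intro hv
    by_cases hP : ∀ j, RSAux.Pv n S hv j = 0
    · have hval : Q' (RSAux.theta n α hv) = RSAux.Q0 n S hv := by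
        rw [hQ']
        exact RSAux.crux n α hbij S hv (fun j => hP j)
      rw [hval]
      congr 1
      rw [RSAux.sum_chi_eq_card _ (fun x => by
          rw [show (∑ j, x j * RSAux.Pv n S hv j) = 0 from
            Finset.sum_eq_zero (fun j _ => by rw [hP j, mul_zero])])]
      rw [RSAux.sum_chi_eq_card _ (fun y => by
          rw [RSAux.Dfield_theta n S hSle α hv,
            show RSAux.Pv n S hv = 0 from funext hP, RSAux.theta_zero, mul_zero, map_zero])]
      rw [hcardG, RSAux.cardK]
    · push_neg at hP
      obtain ⟨j0, hj0⟩ := hP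
      rw [RSAux.sum_chi_eq_zero _
          (fun a b => RSAux.bool_lin_add n S (RSAux.Pv n S hv) a b)
          (Pi.single j0 1)
          (by rw [RSAux.bool_lin_single]; exact hj0)]
      have hDne : RSAux.Dfield n S (RSAux.theta n α hv) ≠ 0 := by
        rw [RSAux.Dfield_theta n S hSle α hv]
        intro h0
        have h1 : RSAux.Pv n S hv = 0 :=
          hbij.1 (h0.trans (RSAux.theta_zero n α).symm)
        exact hj0 (by rw [congrFun h1 j0]; rfl)
      have hy0 : ∃ y0 : GaloisField 2 n,
          Algebra.trace (ZMod 2) (GaloisField 2 n)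
            (y0 * RSAux.Dfield n S (RSAux.theta n α hv)) ≠ 0 := by
        by_contra hno
        push_neg at hno
        exact hDne (RSAux.trace_mul_nondeg n _ hno)
      obtain ⟨y0, hy0⟩ := hy0
      rw [RSAux.sum_chi_eq_zero _
          (fun a b => by rw [add_mul, map_add]) y0 hy0]
      ring
  -- step 4: sum over bijection
  have hsum : ∑ hv : ZMod n → ZMod 2, RSAux.chi (RSAux.Q0 n S hv)
          * ∑ x : ZMod n → ZMod 2, RSAux.chi (∑ j, x j * RSAux.Pv n S hv j)
      = ∑ hK : GaloisField 2 n, RSAux.chi (Q' hK)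
          * ∑ y : GaloisField 2 n,
              RSAux.chi (Algebra.trace (ZMod 2) (GaloisField 2 n)
                (y * RSAux.Dfield n S hK)) := by
    rw [Finset.sum_congr rfl (fun hv _ => hterm hv)]
    exact Fintype.sum_bijective (RSAux.theta n α) hbij _ _ (fun hv => rfl)
  have hsq : ((2 : ℤ) ^ n - 2 * wtB Q) ^ 2 = ((2 : ℤ) ^ n - 2 * wtG n Q') ^ 2 := by
    rw [hwtB, hwtG, hWB, hWF, hsum]
  refine ⟨hsq, ?_⟩
  have h2 : (2 : ℤ) ^ n = 2 * 2 ^ (n - 1) := by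
    have hn1 : n = (n - 1) + 1 := (Nat.sub_add_cancel hn).symm
    rw [hn1, Nat.add_sub_cancel, pow_succ]
    ring
  have key : ∀ (a : ℕ), (((2 : ℤ) ^ n - 2 * a) ^ 2 = 0 ↔ a = 2 ^ (n - 1)) := by
    intro a
    rw [sq_eq_zero_iff, sub_eq_zero, h2]
    constructor
    · intro hh
      have h3 : (a : ℤ) = 2 ^ (n - 1) := by linarith
      exact_mod_cast h3
    · intro hh
      subst hh
      push_cast
      ring
  constructor
  · intro hb
    have h4 : ((2 : ℤ) ^ n - 2 * wtB Q) ^ 2 = 0 := (key _).mpr hb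
    rw [hsq] at h4
    exact (key _).mp h4
  · intro hb
    have h4 : ((2 : ℤ) ^ n - 2 * wtG n Q') ^ 2 = 0 := (key _).mpr hb
    rw [← hsq] at h4
    exact (key _).mp h4
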